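/- A quasivariety Q is structural (i.e., no proper subquasivariety of Q generates the same variety H(Q)) if and only if Q equals the quasivariety generated by its free algebra on countably many generators, Q = Q(F_Q(ω)). -/

import Mathlib

universe u

/-- An algebraic signature: a type of operation symbols with arities. -/
structure Sig where
  ops : Type
  ar : ops → ℕ

/-- Terms of a signature over countably many variables. -/
inductive Term (σ : Sig) : Type
  | var : ℕ → Term σ
  | app : (o : σ.ops) → (Fin (σ.ar o) → Term σ) → Term σ

/-- An algebra for the signature `σ`. -/
structure Alg (σ : Sig) where
  carrier : Type
  interp : (o : σ.ops) → (Fin (σ.ar o) → carrier) → carrier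

/-- Evaluation of a term under an assignment. -/
def evalT {σ : Sig} (A : Alg σ) (v : ℕ → A.carrier) : Term σ → A.carrier
  | .var n => v n
  | .app o args => A.interp o fun i => evalT A v (args i)

/-- Validity of a quasiequation (premises `prem`, conclusion `c`) in `A`. -/
def SatQ {σ : Sig} (A : Alg σ) (prem : List (Term σ × Term σ)) (c : Term σ × Term σ) : Prop :=
  ∀ v : ℕ → A.carrier, (∀ p ∈ prem, evalT A v p.1 = evalT A v p.2) →
    evalT A v c.1 = evalT A v c.2

/-- A quasivariety: a class of algebras axiomatized by a set of quasiequations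
(equivalently, closed under `I`, `S`, `P`, `P_u`). -/
def IsQuasivariety {σ : Sig} (Q : Alg σ → Prop) : Prop :=
  ∃ E : Set (List (Term σ × Term σ) × (Term σ × Term σ)),
    ∀ A, Q A ↔ ∀ e ∈ E, SatQ A e.1 e.2

/-- Identification of terms having the same value in every member of `Q` under
every assignment: the congruence defining the free algebra `F_Q(ω)`. -/
def FreeSetoid {σ : Sig} (Q : Alg σ → Prop) : Setoid (Term σ) where
  r s t := ∀ A, Q A → ∀ v, evalT A v s = evalT A v t
  iseqv := ⟨fun _ _ _ _ => rfl, fun h A hA v => (h A hA v).symm,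
    fun h1 h2 A hA v => (h1 A hA v).trans (h2 A hA v)⟩

/-- The free algebra of `Q` on countably many generators: the term algebra
modulo `Q`-valid identities. -/
def FreeAlg {σ : Sig} (Q : Alg σ → Prop) : Alg σ where
  carrier := Quotient (FreeSetoid Q)
  interp o args := Quotient.liftOn (Quotient.finChoice args)
    (fun f => Quotient.mk (FreeSetoid Q) (Term.app o f))
    (by
      intro f g hfg
      apply Quotient.sound
      intro A hA v
      show evalT A v (Term.app o f) = evalT A v (Term.app o g)
      show A.interp o (fun i => evalT A v (f i)) = A.interp o (fun i => evalT A v (g i))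
      exact congrArg _ (funext fun i => hfg i A hA v))

/-- Substitution of terms for variables. -/
def substT {σ : Sig} (f : ℕ → Term σ) : Term σ → Term σ
  | .var n => f n
  | .app o a => .app o (fun i => substT f (a i))

lemma evalT_subst {σ : Sig} (A : Alg σ) (w : ℕ → A.carrier) (f : ℕ → Term σ) (t : Term σ) :
    evalT A w (substT f t) = evalT A (fun n => evalT A w (f n)) t := by
  induction t with
  | var n => rfl
  | app o a ih =>
    show A.interp o (fun i => evalT A w (substT f (a i))) = A.interp o _
    exact congrArg _ (funext fun i => ih i)

lemma substT_var {σ : Sig} (t : Term σ) : substT Term.var t = t := by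
  induction t with
  | var n => rfl
  | app o a ih =>
    show Term.app o (fun i => substT Term.var (a i)) = _
    exact congrArg _ (funext fun i => ih i)

lemma evalT_free {σ : Sig} (Q : Alg σ → Prop) (f : ℕ → Term σ) (t : Term σ) :
    evalT (FreeAlg Q) (fun n => Quotient.mk (FreeSetoid Q) (f n)) t
      = Quotient.mk (FreeSetoid Q) (substT f t) := by
  induction t with
  | var n => rfl
  | app o a ih =>
    show (FreeAlg Q).interp o
        (fun i => evalT (FreeAlg Q) (fun n => Quotient.mk (FreeSetoid Q) (f n)) (a i)) = _
    have h : (fun i => evalT (FreeAlg Q) (fun n => Quotient.mk (FreeSetoid Q) (f n)) (a i))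
        = fun i => Quotient.mk (FreeSetoid Q) (substT f (a i)) := funext fun i => ih i
    rw [h]
    show Quotient.liftOn (Quotient.finChoice fun i => Quotient.mk (FreeSetoid Q) (substT f (a i)))
      _ _ = _
    rw [Quotient.finChoice_eq]
    rfl

/-- If a quasiequation holds throughout a class `R ⊆ Q` whose equational theory contains
that of `Q`, then it holds in the free algebra `F_Q(ω)`. -/
lemma free_sat {σ : Sig} {Q R : Alg σ → Prop} (hRQ : ∀ A, R A → Q A)
    (heq : ∀ s t : Term σ, (∀ A, R A → ∀ v, evalT A v s = evalT A v t) →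
                  (∀ A, Q A → ∀ v, evalT A v s = evalT A v t))
    {prem : List (Term σ × Term σ)} {c : Term σ × Term σ}
    (h : ∀ A, R A → SatQ A prem c) : SatQ (FreeAlg Q) prem c := by
  intro v hprem
  have hv : v = fun n => Quotient.mk (FreeSetoid Q) ((v n).out) :=
    funext fun n => (Quotient.out_eq _).symm
  rw [hv] at hprem ⊢
  rw [evalT_free, evalT_free]
  apply Quotient.sound
  apply heq
  intro A hA w
  rw [evalT_subst, evalT_subst]
  apply h A hA
  intro p hp
  have := hprem p hp
  rw [evalT_free, evalT_free] at this
  have hrel := Quotient.exact this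
  have := hrel A (hRQ A hA) w
  rw [evalT_subst, evalT_subst] at this
  exact this


/-- Bergman: a quasivariety `Q` is structural — no proper
subquasivariety of `Q` generates the same variety `H(Q)` (i.e. has the same
equational theory) — iff `Q` is the quasivariety generated by its free algebra
on countably many generators, i.e. `Q` consists exactly of the algebras
satisfying all quasiequations valid in `F_Q(ω)`. -/
theorem structural_iff_generated_by_free {σ : Sig} (Q : Alg σ → Prop)
    (hQ : IsQuasivariety Q) :
    (∀ Q' : Alg σ → Prop, IsQuasivariety Q' → (∀ A, Q' A → Q A) →
        (∀ s t : Term σ, (∀ A, Q' A → ∀ v, evalT A v s = evalT A v t) ↔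
                         (∀ A, Q A → ∀ v, evalT A v s = evalT A v t)) →
        Q' = Q)
    ↔ (∀ A, Q A ↔ ∀ prem c, SatQ (FreeAlg Q) prem c → SatQ A prem c) := by
  obtain ⟨E, hE⟩ := hQ
  constructor
  · intro hstr
    set Q' : Alg σ → Prop :=
      fun A => ∀ prem c, SatQ (FreeAlg Q) prem c → SatQ A prem c with hQ'def
    have hFQ' : Q' (FreeAlg Q) := fun _ _ h => h
    have hsub : ∀ A, Q' A → Q A := by
      intro A hA
      rw [hE]
      intro e he
      exact hA e.1 e.2 (free_sat (fun B hB => hB) (fun _ _ h => h)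
        (fun B hB => (hE B).1 hB e he))
    have heqth : ∀ s t : Term σ, (∀ A, Q' A → ∀ v, evalT A v s = evalT A v t) ↔
        (∀ A, Q A → ∀ v, evalT A v s = evalT A v t) := by
      intro s t
      constructor
      · intro h
        have hF := h (FreeAlg Q) hFQ' (fun n => Quotient.mk (FreeSetoid Q) (Term.var n))
        rw [evalT_free, evalT_free, substT_var, substT_var] at hF
        exact Quotient.exact hF
      · intro h A hA v
        have hsatF : SatQ (FreeAlg Q) [] (s, t) :=
          free_sat (fun B hB => hB) (fun _ _ h => h)
            (fun B hB w _ => h B hB w)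
        exact hA [] (s, t) hsatF v (fun p hp => absurd hp List.not_mem_nil)
    have hQ'qv : IsQuasivariety Q' :=
      ⟨{e | SatQ (FreeAlg Q) e.1 e.2}, fun A => ⟨fun h e he => h e.1 e.2 he,
        fun h prem c hc => h (prem, c) hc⟩⟩
    have hQQ' := hstr Q' hQ'qv hsub heqth
    intro A
    exact (iff_of_eq (congrFun hQQ' A)).symm
  · intro hgen Q' hQ'qv hQ'Q heq
    funext A
    apply propext
    constructor
    · exact hQ'Q A
    · intro hA
      obtain ⟨E', hE'⟩ := hQ'qv
      rw [hE']
      intro e he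
      exact (hgen A).1 hA e.1 e.2
        (free_sat hQ'Q (fun s t h => (heq s t).1 h) (fun B hB => (hE' B).1 hB e he))
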